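/- In the setting of the programs (P_nl) and (P̂_nl), assume condition (A2), (A3): (P_nl) has a unique optimal solution x*, (A4): LICQ and SC hold at x* with (unique) multipliers γ* ∈ ℝ^{r_C}, and (A6): max{‖T̂_n − T‖₂, ‖Ĉ_n − C‖_F, ‖d̂_n − d‖₂} = O_P(n^{-1/2}). Let γ̂_n ∈ ℝ^{r_C} be KKT multipliers of (P̂_nl) at x̂_n (which exist since the constraints are linear). Then ‖γ̂_n − γ*‖₂ = O_P( ‖x̂_n − x*‖₂ + n^{-1/2} ). -/

import Mathlib

open MeasureTheory Filter

noncomputable section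

/-- Euclidean (L²) norm on `ℝ^k`. -/
def eucNorm {k : ℕ} (v : Fin k → ℝ) : ℝ := Real.sqrt (∑ i, v i ^ 2)

/-- Frobenius norm. -/
def frobNorm {m k : ℕ} (M : Fin m → Fin k → ℝ) : ℝ :=
  Real.sqrt (∑ i, ∑ j, M i j ^ 2)

/-- `R n = O_P(S n)`. -/
def IsBigOP {Ω : Type*} [MeasurableSpace Ω] (P : Measure Ω) (R S : ℕ → Ω → ℝ) : Prop :=
  ∀ ε : ℝ, 0 < ε → ∃ M : ℝ, 0 < M ∧ ∃ N : ℕ, ∀ n ≥ N,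
    P {ω | M * S n ω < R n ω} < ENNReal.ofReal ε

lemma eucNorm_nonneg {k : ℕ} (v : Fin k → ℝ) : 0 ≤ eucNorm v := Real.sqrt_nonneg _

lemma norm_le_eucNorm {k : ℕ} (v : Fin k → ℝ) : ‖v‖ ≤ eucNorm v := by
  rw [pi_norm_le_iff_of_nonneg (eucNorm_nonneg v)]
  intro i
  rw [Real.norm_eq_abs, ← Real.sqrt_sq_eq_abs]
  exact Real.sqrt_le_sqrt (Finset.single_le_sum (fun j _ => sq_nonneg (v j)) (Finset.mem_univ i))

lemma eucNorm_le_sqrt_mul {k : ℕ} (v : Fin k → ℝ) :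
    eucNorm v ≤ Real.sqrt k * ‖v‖ := by
  rw [eucNorm, ← Real.sqrt_sq (norm_nonneg v), ← Real.sqrt_mul (Nat.cast_nonneg k)]
  apply Real.sqrt_le_sqrt
  calc ∑ i, v i ^ 2 ≤ ∑ _i : Fin k, ‖v‖ ^ 2 := by
        apply Finset.sum_le_sum
        intro i _
        have := norm_le_pi_norm v i
        rw [Real.norm_eq_abs] at this
        nlinarith [abs_nonneg (v i), sq_abs (v i)]
    _ = k * ‖v‖ ^ 2 := by simp [Finset.sum_const, nsmul_eq_mul]

lemma norm_le_frobNorm {m k : ℕ} (M : Fin m → Fin k → ℝ) : ‖M‖ ≤ frobNorm M := by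
  unfold frobNorm
  rw [pi_norm_le_iff_of_nonneg (Real.sqrt_nonneg _)]
  intro i
  rw [pi_norm_le_iff_of_nonneg (Real.sqrt_nonneg _)]
  intro j
  rw [Real.norm_eq_abs, ← Real.sqrt_sq_eq_abs]
  apply Real.sqrt_le_sqrt
  calc M i j ^ 2 ≤ ∑ j', M i j' ^ 2 :=
        Finset.single_le_sum (f := fun j' => M i j' ^ 2)
          (fun j' _ => sq_nonneg _) (Finset.mem_univ j)
    _ ≤ ∑ i', ∑ j', M i' j' ^ 2 :=
        Finset.single_le_sum (f := fun i' => ∑ j', M i' j' ^ 2)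
          (fun i' _ => Finset.sum_nonneg fun j' _ => sq_nonneg _) (Finset.mem_univ i)

section DetHelpers

lemma max_le_abs (a : ℝ) : max a 0 ≤ |a| := max_le (le_abs_self a) (abs_nonneg a)

lemma sum_subtype_of_support {rC : ℕ} (Pr : Fin rC → Prop) [DecidablePred Pr]
    (v : Fin rC → ℝ) (hv : ∀ j, ¬ Pr j → v j = 0) (φ : Fin rC → ℝ) :
    ∑ j : {j // Pr j}, v j.1 * φ j.1 = ∑ j, v j * φ j := by
  rw [← Finset.sum_filter_of_ne (p := Pr) (s := Finset.univ)
    (f := fun j => v j * φ j) (by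
      intro j _ hne
      by_contra hp
      exact hne (by show v j * φ j = 0; rw [hv j hp, zero_mul]))]
  exact (Finset.sum_subtype (Finset.univ.filter Pr)
    (by simp) (fun j => v j * φ j)).symm

lemma arith2' (a b : ℝ) (ha : 0 ≤ a) (hb : 0 < b) : a * (b / (2 * (a + 1))) < b / 2 := by
  have h : a * (b / (2 * (a + 1))) = (a * b) / (2 * (a + 1)) := by ring
  rw [h, div_lt_div_iff₀ (by linarith) (by norm_num)]
  have h2 : b * (2 * (a + 1)) = a * b * 2 + 2 * b := by ring
  linarith

end DetHelpers

set_option maxHeartbeats 1000000 in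
lemma det_key {k dT rC : ℕ}
    (𝕏 : Set (Fin k → ℝ)) (h𝕏c : IsCompact 𝕏)
    (T : Fin dT → ℝ)
    (f : (Fin k → ℝ) → (Fin dT → ℝ) → ℝ)
    (hf : ContDiff ℝ 2 (fun p : (Fin k → ℝ) × (Fin dT → ℝ) => f p.1 p.2))
    (C : Fin rC → Fin k → ℝ) (d : Fin rC → ℝ)
    (xstar : Fin k → ℝ) (hxX : xstar ∈ 𝕏)
    (hxfeas : ∀ j, ∑ i, C j i * xstar i ≤ d j)
    (γstar : Fin rC → ℝ)
    (hLICQ : LinearIndependent ℝ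
      (fun j : {j : Fin rC // ∑ i, C j i * xstar i = d j} => C j.1))
    (hstat : ∀ i, (fderiv ℝ (fun x' => f x' T) xstar) (Pi.single i 1)
        + ∑ j, γstar j * C j i = 0)
    (hcompl : ∀ j, γstar j * ((∑ i, C j i * xstar i) - d j) = 0)
    (hrC : 0 < rC) :
    ∃ η₀ > 0, ∃ M₁ > 0, ∀ (T' : Fin dT → ℝ) (C' : Fin rC → Fin k → ℝ) (d' : Fin rC → ℝ)
      (x' : Fin k → ℝ) (γ' : Fin rC → ℝ) (e : ℝ),
      0 ≤ e → e ≤ η₀ → ‖T' - T‖ ≤ e → ‖C' - C‖ ≤ e → ‖d' - d‖ ≤ e →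
      x' ∈ 𝕏 →
      (∀ j, 0 ≤ γ' j) →
      (∀ i, (fderiv ℝ (fun y => f y T') x') (Pi.single i 1) + ∑ j, γ' j * C' j i = 0) →
      (∀ j, γ' j * ((∑ i, C' j i * x' i) - d' j) = 0) →
      ‖γ' - γstar‖ ≤ M₁ * (‖x' - xstar‖ + e) := by
  classical
  -- bound on 𝕏
  obtain ⟨X₀, hX₀⟩ := isBounded_iff_forall_norm_le.mp h𝕏c.isBounded
  set X : ℝ := max X₀ 1 with hXdef
  have hX1 : (1:ℝ) ≤ X := le_max_right _ _
  have hX0 : (0:ℝ) ≤ X := le_trans zero_le_one hX1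
  have hX : ∀ x ∈ 𝕏, ‖x‖ ≤ X := fun x hx => le_trans (hX₀ x hx) (le_max_left _ _)
  set F : (Fin k → ℝ) × (Fin dT → ℝ) → ℝ := fun p => f p.1 p.2 with hFdef
  -- derivative rewriting
  have hgrad : ∀ (x : Fin k → ℝ) (T' : Fin dT → ℝ) (v : Fin k → ℝ),
      fderiv ℝ (fun y => f y T') x v = fderiv ℝ F (x, T') (v, 0) := by
    intro x T' v
    have h1 : HasFDerivAt F (fderiv ℝ F (x, T')) (x, T') :=
      ((hf.differentiable (by norm_num)).differentiableAt).hasFDerivAt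
    have h2 : HasFDerivAt (fun y : Fin k → ℝ => (y, T'))
        ((ContinuousLinearMap.id ℝ (Fin k → ℝ)).prod 0) x :=
      (hasFDerivAt_id x).prodMk (hasFDerivAt_const T' x)
    have h3 : HasFDerivAt (fun y => f y T')
        ((fderiv ℝ F (x, T')).comp ((ContinuousLinearMap.id ℝ (Fin k → ℝ)).prod 0)) x :=
      by have := h1.comp x h2; exact this
    rw [h3.fderiv]
    simp
  -- the big ball
  set R : ℝ := X + ‖T‖ + 1 with hRdef
  set s : Set ((Fin k → ℝ) × (Fin dT → ℝ)) := Metric.closedBall (0, T) R with hsdef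
  have hsub : ∀ (x : Fin k → ℝ) (T' : Fin dT → ℝ), x ∈ 𝕏 → dist T' T ≤ 1 → (x, T') ∈ s := by
    intro x T' hx hT'
    simp only [hsdef, Metric.mem_closedBall, Prod.dist_eq]
    rw [max_le_iff]
    constructor
    · calc dist x 0 = ‖x‖ := by rw [dist_zero_right]
        _ ≤ X := hX x hx
        _ ≤ R := by rw [hRdef]; nlinarith [norm_nonneg T]
    · calc dist T' T ≤ 1 := hT'
        _ ≤ R := by rw [hRdef]; nlinarith [norm_nonneg T]
  have hsK : IsCompact s := isCompact_closedBall _ _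
  have hsconv : Convex ℝ s := convex_closedBall _ _
  have hscen : ((0 : Fin k → ℝ), T) ∈ s := Metric.mem_closedBall_self (by
    rw [hRdef]; nlinarith [norm_nonneg T])
  have hDF1 : ContDiff ℝ 1 (fderiv ℝ F) := hf.fderiv_right (by norm_num)
  obtain ⟨G₀, hG₀⟩ := hsK.exists_bound_of_continuousOn
    ((hDF1.continuous).continuousOn)
  have hG₀0 : 0 ≤ G₀ := le_trans (norm_nonneg _) (hG₀ _ hscen)
  set G : ℝ := G₀ + 1 with hGdef
  have hG0 : 0 < G := by positivity
  obtain ⟨L₀, hL₀⟩ := hsK.exists_bound_of_continuousOn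
    ((hDF1.continuous_fderiv one_ne_zero).continuousOn)
  set L : ℝ := max L₀ 0 with hLdef
  have hL0 : 0 ≤ L := le_max_right _ _
  have hLip : ∀ p ∈ s, ∀ q ∈ s, ‖fderiv ℝ F p - fderiv ℝ F q‖ ≤ L * ‖p - q‖ := by
    intro p hp q hq
    exact hsconv.norm_image_sub_le_of_norm_fderiv_le
      (fun z _ => (hDF1.differentiable one_ne_zero).differentiableAt)
      (fun z hz => le_trans (hL₀ z hz) (le_max_left _ _)) hq hp
  -- the positivity constant c₀ from compactness
  set Δ : Set (Fin rC → ℝ) := {γ | (∀ j, 0 ≤ γ j) ∧ ∑ j, γ j = 1} with hΔdef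
  set ψ : (Fin rC → ℝ) × (Fin k → ℝ) → ℝ := fun p =>
    ‖(fun i => ∑ j, p.1 j * C j i)‖ + ∑ j, p.1 j * max (d j - ∑ i, C j i * p.2 i) 0
    with hψdef
  have hΔc : IsCompact Δ := by
    have hclosed : IsClosed Δ := by
      have h1 : IsClosed {γ : Fin rC → ℝ | ∀ j, 0 ≤ γ j} := by
        have : {γ : Fin rC → ℝ | ∀ j, 0 ≤ γ j} = ⋂ j, {γ | 0 ≤ γ j} := by
          ext γ; simp
        rw [this]
        exact isClosed_iInter fun j => isClosed_le continuous_const (continuous_apply j)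
      have h2 : IsClosed {γ : Fin rC → ℝ | ∑ j, γ j = 1} :=
        isClosed_eq (continuous_finset_sum _ fun j _ => continuous_apply j) continuous_const
      have : Δ = {γ : Fin rC → ℝ | ∀ j, 0 ≤ γ j} ∩ {γ | ∑ j, γ j = 1} := by
        ext γ; simp [hΔdef]
      rw [this]; exact h1.inter h2
    have hbdd : Bornology.IsBounded Δ := by
      rw [isBounded_iff_forall_norm_le]
      refine ⟨1, fun γ hγ => ?_⟩
      obtain ⟨hγ0, hγ1⟩ := hγ
      rw [pi_norm_le_iff_of_nonneg zero_le_one]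
      intro j
      rw [Real.norm_eq_abs, abs_of_nonneg (hγ0 j), ← hγ1]
      exact Finset.single_le_sum (fun j' _ => hγ0 j') (Finset.mem_univ j)
    exact Metric.isCompact_of_isClosed_isBounded hclosed hbdd
  have hΔne : Δ.Nonempty := by
    refine ⟨fun _ => 1 / rC, fun j => by positivity, ?_⟩
    rw [Finset.sum_const, Finset.card_univ, Fintype.card_fin, nsmul_eq_mul]
    field_simp
  obtain ⟨x₁, hx₁⟩ := (Set.nonempty_def.mp ⟨xstar, hxX⟩ : 𝕏.Nonempty)
  have hψcont : ContinuousOn ψ (Δ ×ˢ 𝕏) := by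
    apply Continuous.continuousOn
    apply Continuous.add
    · apply Continuous.norm
      apply continuous_pi
      intro i
      exact continuous_finset_sum _ fun j _ =>
        ((continuous_apply j).comp continuous_fst).mul continuous_const
    · apply continuous_finset_sum _ fun j _ => ?_
      apply Continuous.mul ((continuous_apply j).comp continuous_fst)
      apply Continuous.max ?_ continuous_const
      apply Continuous.sub continuous_const
      exact continuous_finset_sum _ fun i _ =>
        (continuous_const.mul ((continuous_apply i).comp continuous_snd))
  obtain ⟨p₀, hp₀mem, hp₀min⟩ := (hΔc.prod h𝕏c).exists_isMinOn
    (Set.nonempty_def.mpr ⟨(_, _), Set.mk_mem_prod hΔne.choose_spec hx₁⟩) hψcont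
  set c₀ : ℝ := ψ p₀ with hc₀def
  have hc₀pos : 0 < c₀ := by
    set γ₀ := p₀.1 with hγ₀def
    set x₀ := p₀.2 with hx₀def
    obtain ⟨hγ₀Δ, hx₀X⟩ := hp₀mem
    obtain ⟨hγ₀0, hγ₀1⟩ := hγ₀Δ
    have hc₀eq : c₀ = ‖(fun i => ∑ j, γ₀ j * C j i)‖
        + ∑ j, γ₀ j * max (d j - ∑ i, C j i * x₀ i) 0 := rfl
    have hterm2 : 0 ≤ ∑ j, γ₀ j * max (d j - ∑ i, C j i * x₀ i) 0 :=
      Finset.sum_nonneg fun j _ => mul_nonneg (hγ₀0 j) (le_max_right _ _)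
    have hterm1 : 0 ≤ ‖(fun i => ∑ j, γ₀ j * C j i)‖ := norm_nonneg _
    by_contra hcon
    push_neg at hcon
    have h1 : ‖(fun i => ∑ j, γ₀ j * C j i)‖ = 0 := by linarith
    have h2 : ∑ j, γ₀ j * max (d j - ∑ i, C j i * x₀ i) 0 = 0 := by linarith
    have hv0 : ∀ i, ∑ j, γ₀ j * C j i = 0 := by
      intro i
      have := norm_eq_zero.mp h1
      exact congrFun this i
    have h2' : ∀ j, γ₀ j * max (d j - ∑ i, C j i * x₀ i) 0 = 0 := by
      intro j
      have := (Finset.sum_eq_zero_iff_of_nonneg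
        (fun j _ => mul_nonneg (hγ₀0 j) (le_max_right _ _))).mp h2
      exact this j (Finset.mem_univ j)
    have hsupp0 : ∀ j, γ₀ j ≠ 0 → d j - ∑ i, C j i * x₀ i ≤ 0 := by
      intro j hj
      have := h2' j
      rcases mul_eq_zero.mp this with h | h
      · exact absurd h hj
      · by_contra hq
        push_neg at hq
        rw [max_eq_left (le_of_lt hq)] at h
        linarith
    have hswap : ∀ z : Fin k → ℝ, ∑ j, γ₀ j * ∑ i, C j i * z i = 0 := by
      intro z
      have : ∑ j, γ₀ j * ∑ i, C j i * z i = ∑ i, (∑ j, γ₀ j * C j i) * z i := by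
        simp only [Finset.mul_sum, Finset.sum_mul]
        rw [Finset.sum_comm]
        exact Finset.sum_congr rfl fun i _ => Finset.sum_congr rfl fun j _ => by ring
      rw [this]
      simp only [hv0, zero_mul, Finset.sum_const_zero]
    have hA0 : ∑ j, γ₀ j * (d j - ∑ i, C j i * xstar i) = ∑ j, γ₀ j * d j := by
      simp only [mul_sub]
      rw [Finset.sum_sub_distrib]
      simp only [hswap xstar, sub_zero]
    have hAle : ∑ j, γ₀ j * d j ≤ 0 := by
      have hle : ∑ j, γ₀ j * d j ≤ ∑ j, γ₀ j * ∑ i, C j i * x₀ i := by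
        apply Finset.sum_le_sum
        intro j _
        by_cases hj : γ₀ j = 0
        · simp [hj]
        · have := hsupp0 j hj
          have hd : d j ≤ ∑ i, C j i * x₀ i := by linarith
          exact mul_le_mul_of_nonneg_left hd (hγ₀0 j)
      rw [hswap x₀] at hle
      exact hle
    have hAeq : ∑ j, γ₀ j * (d j - ∑ i, C j i * xstar i) = 0 := by
      have hge : 0 ≤ ∑ j, γ₀ j * (d j - ∑ i, C j i * xstar i) :=
        Finset.sum_nonneg fun j _ => mul_nonneg (hγ₀0 j) (sub_nonneg.mpr (hxfeas j))
      rw [hA0]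
      linarith [hA0 ▸ hge]
    have hact : ∀ j, γ₀ j ≠ 0 → ∑ i, C j i * xstar i = d j := by
      intro j hj
      have := (Finset.sum_eq_zero_iff_of_nonneg
        (fun j _ => mul_nonneg (hγ₀0 j) (sub_nonneg.mpr (hxfeas j)))).mp hAeq j
        (Finset.mem_univ j)
      rcases mul_eq_zero.mp this with h | h
      · exact absurd h hj
      · linarith [sub_eq_zero.mp h]
    have hγ₀supp : ∀ j, ¬ (∑ i, C j i * xstar i = d j) → γ₀ j = 0 := by
      intro j hj
      by_contra hne
      exact hj (hact j hne)
    have hzero : ∀ j, γ₀ j = 0 := by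
      have hlin := Fintype.linearIndependent_iff.mp hLICQ
        (fun j : {j : Fin rC // ∑ i, C j i * xstar i = d j} => γ₀ j.1) (by
          funext i
          rw [Finset.sum_apply]
          simp only [Pi.smul_apply, smul_eq_mul]
          rw [sum_subtype_of_support _ γ₀ hγ₀supp (fun j => C j i)]
          exact hv0 i)
      intro j
      by_cases hj : (∑ i, C j i * xstar i = d j)
      · exact hlin ⟨j, hj⟩
      · exact hγ₀supp j hj
    exact one_ne_zero (by
      rw [← hγ₀1]
      exact Finset.sum_eq_zero fun j _ => hzero j)
  -- the antilipschitz constant from LICQ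
  have hKex : ∃ K : ℝ, 0 < K ∧ ∀ μ : Fin rC → ℝ,
      (∀ j, ¬ (∑ i, C j i * xstar i = d j) → μ j = 0) →
      ‖μ‖ ≤ K * ‖fun i => ∑ j, μ j * C j i‖ := by
    set Pr : Fin rC → Prop := fun j => (∑ i, C j i * xstar i = d j) with hPrdef
    let lmap : ({j // Pr j} → ℝ) →ₗ[ℝ] (Fin k → ℝ) :=
      { toFun := fun g => ∑ j, g j • C j.1
        map_add' := by
          intro a b
          simp only [Pi.add_apply, add_smul]
          rw [Finset.sum_add_distrib]
        map_smul' := by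
          intro c a
          simp only [Pi.smul_apply, smul_eq_mul, RingHom.id_apply, mul_smul]
          rw [Finset.smul_sum] }
    have hker : LinearMap.ker lmap = ⊥ := by
      rw [LinearMap.ker_eq_bot']
      intro g hg
      have := Fintype.linearIndependent_iff.mp hLICQ g hg
      funext j
      exact this j
    obtain ⟨K, hK0, hKA⟩ := lmap.exists_antilipschitzWith hker
    refine ⟨(K : ℝ), hK0, ?_⟩
    intro μ hμ
    have hlmap : lmap (fun j => μ j.1) = fun i => ∑ j, μ j * C j i := by
      funext i
      show (∑ j : {j // Pr j}, μ j.1 • C j.1) i = _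
      rw [Finset.sum_apply]
      simp only [Pi.smul_apply, smul_eq_mul]
      exact sum_subtype_of_support _ μ hμ (fun j => C j i)
    have h1 : ‖(fun j : {j // Pr j} => μ j.1)‖ ≤ K * ‖lmap (fun j => μ j.1)‖ := by
      have := hKA.le_mul_dist (fun j : {j // Pr j} => μ j.1) 0
      simpa [dist_zero_right, map_zero] using this
    have h2 : ‖μ‖ ≤ ‖(fun j : {j // Pr j} => μ j.1)‖ := by
      rw [pi_norm_le_iff_of_nonneg (norm_nonneg _)]
      intro j
      by_cases hj : Pr j
      · exact norm_le_pi_norm (fun j : {j // Pr j} => μ j.1) ⟨j, hj⟩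
      · rw [hμ j hj]
        simp
    calc ‖μ‖ ≤ ‖(fun j : {j // Pr j} => μ j.1)‖ := h2
      _ ≤ K * ‖lmap (fun j => μ j.1)‖ := h1
      _ = K * ‖fun i => ∑ j, μ j * C j i‖ := by rw [hlmap]
  obtain ⟨K, hKpos, hKanti⟩ := hKex
  -- minimal slack of inactive constraints
  set t : Fin rC → ℝ := fun j =>
    if (∑ i, C j i * xstar i = d j) then 1 else d j - ∑ i, C j i * xstar i with htdef
  have ht : ∀ j, 0 < t j := by
    intro j
    by_cases h : (∑ i, C j i * xstar i = d j)
    · simp [htdef, h]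
    · simp only [htdef, if_neg h]
      exact sub_pos.mpr (lt_of_le_of_ne (hxfeas j) h)
  have hFinne : (Finset.univ : Finset (Fin rC)).Nonempty := ⟨⟨0, hrC⟩, Finset.mem_univ _⟩
  set δ₀ : ℝ := Finset.univ.inf' hFinne t with hδ₀def
  have hδ₀pos : 0 < δ₀ := by
    rw [hδ₀def, Finset.lt_inf'_iff]
    exact fun j _ => ht j
  have hδ₀le : ∀ j, ¬ (∑ i, C j i * xstar i = d j) →
      δ₀ ≤ d j - ∑ i, C j i * xstar i := by
    intro j hj
    calc δ₀ ≤ t j := Finset.inf'_le _ (Finset.mem_univ j)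
      _ = d j - ∑ i, C j i * xstar i := by simp [htdef, hj]
  -- the constants
  set η₀ : ℝ := min 1 (min (c₀ / (2 * (2 + k * X))) (δ₀ / (2 * (1 + k * X)))) with hη₀def
  have hkX : 0 ≤ (k:ℝ) * X := mul_nonneg (Nat.cast_nonneg k) hX0
  have hη₀pos : 0 < η₀ := by
    refine lt_min one_pos (lt_min ?_ ?_)
    · exact div_pos hc₀pos (by linarith)
    · exact div_pos hδ₀pos (by linarith)
  set B : ℝ := 2 * G / c₀ with hBdef
  have hBpos : 0 < B := div_pos (by linarith) hc₀pos
  set CB : ℝ := ‖C‖ with hCBdef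
  have hCB0 : 0 ≤ CB := norm_nonneg _
  set δ : ℝ := δ₀ / (2 * (k * CB + 1)) with hδdef
  have hkCB : 0 ≤ (k:ℝ) * CB := mul_nonneg (Nat.cast_nonneg k) hCB0
  have hδpos : 0 < δ := div_pos hδ₀pos (by linarith)
  set M₁ : ℝ := K * (L + B + 1) + (B + ‖γstar‖ + 1) / δ + 1 with hM₁def
  have hM₁pos : 0 < M₁ := by
    have h1 : 0 ≤ K * (L + B + 1) := mul_nonneg (le_of_lt hKpos) (by linarith)
    have h2 : 0 ≤ (B + ‖γstar‖ + 1) / δ :=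
      div_nonneg (by linarith [norm_nonneg γstar]) (le_of_lt hδpos)
    rw [hM₁def]
    linarith
  refine ⟨η₀, hη₀pos, M₁, hM₁pos, ?_⟩
  intro T' C' d' x' γ' e he0 heη hTe hCe hde hx'X hγ'0 hstat' hcompl'
  -- entrywise perturbation bounds
  have hCe' : ∀ j i, |C' j i - C j i| ≤ e := by
    intro j i
    have h1 : ‖C' j - C j‖ ≤ e := by
      have := le_trans (norm_le_pi_norm (C' - C) j) hCe
      simpa using this
    have h2 : |C' j i - C j i| ≤ ‖C' j - C j‖ := by
      have := norm_le_pi_norm (C' j - C j) i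
      simpa [Real.norm_eq_abs] using this
    linarith
  have hde' : ∀ j, |d' j - d j| ≤ e := by
    intro j
    have := norm_le_pi_norm (d' - d) j
    rw [Real.norm_eq_abs, Pi.sub_apply] at this
    linarith
  have hCb : ∀ j i, |C j i| ≤ CB := by
    intro j i
    have h1 : ‖C j‖ ≤ CB := norm_le_pi_norm C j
    have h2 := norm_le_pi_norm (C j) i
    rw [Real.norm_eq_abs] at h2
    linarith
  have hx'b : ∀ i, |x' i| ≤ X := by
    intro i
    have h1 := hX x' hx'X
    have h2 := norm_le_pi_norm x' i
    rw [Real.norm_eq_abs] at h2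
    linarith
  set u : ℝ := ‖x' - xstar‖ with hudef
  have hu0 : 0 ≤ u := norm_nonneg _
  have hue : ∀ i, |x' i - xstar i| ≤ u := by
    intro i
    have := norm_le_pi_norm (x' - xstar) i
    rwa [Real.norm_eq_abs, Pi.sub_apply] at this
  have he1 : e ≤ 1 := le_trans heη (min_le_left _ _)
  have heA : e ≤ c₀ / (2 * (2 + k * X)) :=
    le_trans heη (le_trans (min_le_right _ _) (min_le_left _ _))
  have heB : e ≤ δ₀ / (2 * (1 + k * X)) :=
    le_trans heη (le_trans (min_le_right _ _) (min_le_right _ _))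
  have hmem' : (x', T') ∈ s := hsub x' T' hx'X (by rw [dist_eq_norm]; linarith)
  have hmems : (xstar, T) ∈ s := hsub xstar T hxX (by simp)
  -- gradient values
  set g' : Fin k → ℝ := fun i => fderiv ℝ F (x', T') (Pi.single i 1, 0) with hg'def
  set gs : Fin k → ℝ := fun i => fderiv ℝ F (xstar, T) (Pi.single i 1, 0) with hgsdef
  have hstat'2 : ∀ i, g' i + ∑ j, γ' j * C' j i = 0 := by
    intro i
    have := hstat' i
    rwa [hgrad] at this
  have hstat2 : ∀ i, gs i + ∑ j, γstar j * C j i = 0 := by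
    intro i
    have := hstat i
    rwa [hgrad] at this
  have hsingle1 : ∀ i : Fin k, ‖(Pi.single i 1 : Fin k → ℝ)‖ ≤ 1 := by
    intro i
    rw [pi_norm_le_iff_of_nonneg zero_le_one]
    intro j
    rw [Pi.single_apply]
    by_cases h : j = i <;> simp [h]
  have hsingle : ∀ i : Fin k, ‖((Pi.single i 1 : Fin k → ℝ), (0 : Fin dT → ℝ))‖ ≤ 1 := by
    intro i
    rw [Prod.norm_def]
    simp only [norm_zero]
    exact max_le (hsingle1 i) zero_le_one
  have hg'b : ∀ i, |g' i| ≤ G := by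
    intro i
    calc |g' i| ≤ ‖fderiv ℝ F (x', T')‖ * ‖((Pi.single i 1 : Fin k → ℝ), (0 : Fin dT → ℝ))‖ := by
          rw [← Real.norm_eq_abs]
          exact (fderiv ℝ F (x', T')).le_opNorm _
      _ ≤ G₀ * 1 := mul_le_mul (hG₀ _ hmem') (hsingle i) (norm_nonneg _) hG₀0
      _ ≤ G := by rw [hGdef]; linarith
  have hgdiff : ∀ i, |g' i - gs i| ≤ L * (u + e) := by
    intro i
    have h1 : g' i - gs i
        = (fderiv ℝ F (x', T') - fderiv ℝ F (xstar, T)) ((Pi.single i 1 : Fin k → ℝ), (0 : Fin dT → ℝ)) := by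
      rw [ContinuousLinearMap.sub_apply]
    rw [h1, ← Real.norm_eq_abs]
    have hprodnorm : ‖(x', T') - (xstar, T)‖ ≤ u + e := by
      rw [Prod.norm_def]
      apply max_le
      · show ‖(x', T').1 - (xstar, T).1‖ ≤ u + e
        simp only []
        linarith
      · show ‖(x', T').2 - (xstar, T).2‖ ≤ u + e
        simp only []
        linarith
    calc ‖(fderiv ℝ F (x', T') - fderiv ℝ F (xstar, T)) ((Pi.single i 1 : Fin k → ℝ), (0 : Fin dT → ℝ))‖
        ≤ ‖fderiv ℝ F (x', T') - fderiv ℝ F (xstar, T)‖ * ‖((Pi.single i 1 : Fin k → ℝ), (0 : Fin dT → ℝ))‖ :=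
          ContinuousLinearMap.le_opNorm _ _
      _ ≤ (L * ‖(x', T') - (xstar, T)‖) * 1 :=
          mul_le_mul (hLip _ hmem' _ hmems) (hsingle i) (norm_nonneg _)
            (mul_nonneg hL0 (norm_nonneg _))
      _ ≤ L * (u + e) := by
          rw [mul_one]
          exact mul_le_mul_of_nonneg_left hprodnorm hL0
  set s' : ℝ := ∑ j, γ' j with hs'def
  have hs'0 : 0 ≤ s' := Finset.sum_nonneg fun j _ => hγ'0 j
  have hvb : ∀ i, |∑ j, γ' j * C j i| ≤ G + s' * e := by
    intro i
    have hsplit : ∑ j, γ' j * C j i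
        = ∑ j, γ' j * C' j i + ∑ j, γ' j * (C j i - C' j i) := by
      rw [← Finset.sum_add_distrib]
      exact Finset.sum_congr rfl fun j _ => by ring
    have h2 : ∑ j, γ' j * C' j i = -g' i := by linarith [hstat'2 i]
    have h3 : |∑ j, γ' j * (C j i - C' j i)| ≤ s' * e := by
      calc |∑ j, γ' j * (C j i - C' j i)| ≤ ∑ j, |γ' j * (C j i - C' j i)| :=
            Finset.abs_sum_le_sum_abs _ _
        _ ≤ ∑ j, γ' j * e := by
            apply Finset.sum_le_sum
            intro j _
            rw [abs_mul, abs_of_nonneg (hγ'0 j)]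
            apply mul_le_mul_of_nonneg_left ?_ (hγ'0 j)
            rw [abs_sub_comm]
            exact hCe' j i
        _ = s' * e := by rw [← Finset.sum_mul]
    rw [hsplit, h2]
    calc |-g' i + ∑ j, γ' j * (C j i - C' j i)|
        ≤ |-g' i| + |∑ j, γ' j * (C j i - C' j i)| := abs_add_le _ _
      _ ≤ G + s' * e := by
          rw [abs_neg]
          linarith [hg'b i]
  have hcompl2 : ∀ j, γ' j ≠ 0 → ∑ i, C' j i * x' i = d' j := by
    intro j hj
    rcases mul_eq_zero.mp (hcompl' j) with h | h
    · exact absurd h hj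
    · linarith [sub_eq_zero.mp h]
  -- bound on the total multiplier mass
  have hs'B : s' ≤ B := by
    rcases eq_or_lt_of_le hs'0 with h0 | hpos
    · rw [← h0]
      linarith
    · set γb : Fin rC → ℝ := fun j => γ' j / s' with hγbdef
      have hγbsum : ∑ j, γb j = 1 := by
        rw [hγbdef]
        simp only []
        rw [← Finset.sum_div]
        field_simp
        exact hs'def.symm
      have hγbΔ : γb ∈ Δ := ⟨fun j => div_nonneg (hγ'0 j) hs'0, hγbsum⟩
      have hmin : c₀ ≤ ψ (γb, x') := isMinOn_iff.mp hp₀min (γb, x') (Set.mk_mem_prod hγbΔ hx'X)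
      have hψval : ψ (γb, x') = ‖(fun i => ∑ j, γb j * C j i)‖
          + ∑ j, γb j * max (d j - ∑ i, C j i * x' i) 0 := rfl
      have hterm1 : ‖(fun i => ∑ j, γb j * C j i)‖ ≤ s'⁻¹ * (G + s' * e) := by
        rw [pi_norm_le_iff_of_nonneg (mul_nonneg (inv_nonneg.mpr hs'0)
          (add_nonneg (le_of_lt hG0) (mul_nonneg hs'0 he0)))]
        intro i
        have heq : ∑ j, γb j * C j i = s'⁻¹ * ∑ j, γ' j * C j i := by
          rw [Finset.mul_sum]
          exact Finset.sum_congr rfl fun j _ => by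
            rw [hγbdef]
            simp only []
            ring
        rw [Real.norm_eq_abs, heq, abs_mul, abs_of_nonneg (inv_nonneg.mpr hs'0)]
        exact mul_le_mul_of_nonneg_left (hvb i) (inv_nonneg.mpr hs'0)
      have hterm2 : ∑ j, γb j * max (d j - ∑ i, C j i * x' i) 0 ≤ e * (1 + k * X) := by
        have hper : ∀ j, γb j * max (d j - ∑ i, C j i * x' i) 0 ≤ γb j * (e * (1 + k * X)) := by
          intro j
          by_cases hj : γ' j = 0
          · rw [hγbdef]
            simp [hj]
          · apply mul_le_mul_of_nonneg_left ?_ (div_nonneg (hγ'0 j) hs'0)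
            have hcc := hcompl2 j hj
            have hsum : ∑ i, (C' j i - C j i) * x' i
                = ∑ i, C' j i * x' i - ∑ i, C j i * x' i := by
              rw [← Finset.sum_sub_distrib]
              exact Finset.sum_congr rfl fun i _ => by ring
            have heq : d j - ∑ i, C j i * x' i
                = (d j - d' j) + ∑ i, (C' j i - C j i) * x' i := by
              rw [hsum, hcc]
              ring
            have h1 : |∑ i, (C' j i - C j i) * x' i| ≤ k * (e * X) := by
              calc |∑ i, (C' j i - C j i) * x' i| ≤ ∑ i, |(C' j i - C j i) * x' i| :=
                    Finset.abs_sum_le_sum_abs _ _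
                _ ≤ ∑ _i : Fin k, e * X := by
                    apply Finset.sum_le_sum
                    intro i _
                    rw [abs_mul]
                    exact mul_le_mul (hCe' j i) (hx'b i) (abs_nonneg _) he0
                _ = k * (e * X) := by
                    rw [Finset.sum_const, Finset.card_univ, Fintype.card_fin, nsmul_eq_mul]
            calc max (d j - ∑ i, C j i * x' i) 0 ≤ |d j - ∑ i, C j i * x' i| := max_le_abs _
              _ ≤ |d j - d' j| + |∑ i, (C' j i - C j i) * x' i| := by
                  rw [heq]
                  exact abs_add_le _ _
              _ ≤ e + k * (e * X) := by
                  have := hde' j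
                  rw [abs_sub_comm] at this
                  linarith
              _ = e * (1 + k * X) := by ring
        calc ∑ j, γb j * max (d j - ∑ i, C j i * x' i) 0
            ≤ ∑ j, γb j * (e * (1 + k * X)) := Finset.sum_le_sum fun j _ => hper j
          _ = e * (1 + k * X) := by rw [← Finset.sum_mul, hγbsum, one_mul]
      have hchain : c₀ ≤ s'⁻¹ * (G + s' * e) + e * (1 + k * X) := by
        rw [hψval] at hmin
        exact le_trans hmin (add_le_add hterm1 hterm2)
      have hinv : s'⁻¹ * s' = 1 := inv_mul_cancel₀ (ne_of_gt hpos)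
      have h2e : e * (2 * (2 + k * X)) ≤ c₀ := (le_div_iff₀ (by linarith)).mp heA
      rw [hBdef, le_div_iff₀ hc₀pos]
      have hmul := mul_le_mul_of_nonneg_right hchain (le_of_lt hpos)
      have hexp : (s'⁻¹ * (G + s' * e) + e * (1 + k * X)) * s'
          = (G + s' * e) + e * (1 + k * X) * s' := by
        field_simp
      rw [hexp] at hmul
      have h5 := mul_le_mul_of_nonneg_right h2e hs'0
      have hr : s' * e + e * (1 + (k:ℝ) * X) * s' = e * (2 * (2 + (k:ℝ) * X)) * s' / 2 := by
        ring
      have hfinal : c₀ * s' ≤ 2 * G := by linarith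
      have hcomm : s' * c₀ = c₀ * s' := by ring
      linarith
  -- case split on distance to the optimum
  by_cases hu : u ≤ δ
  · -- near case: inactive multipliers vanish
    have hinact : ∀ j, ¬(∑ i, C j i * xstar i = d j) → γ' j = 0 ∧ γstar j = 0 := by
      intro j hj
      constructor
      · by_contra hne
        have hcc := hcompl2 j hne
        have e1 : ∑ i, C j i * (xstar i - x' i)
            = ∑ i, C j i * xstar i - ∑ i, C j i * x' i := by
          rw [← Finset.sum_sub_distrib]
          exact Finset.sum_congr rfl fun i _ => by ring
        have e2 : ∑ i, (C j i - C' j i) * x' i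
            = ∑ i, C j i * x' i - ∑ i, C' j i * x' i := by
          rw [← Finset.sum_sub_distrib]
          exact Finset.sum_congr rfl fun i _ => by ring
        have hb1 : |∑ i, C j i * (xstar i - x' i)| ≤ k * (CB * u) := by
          calc |∑ i, C j i * (xstar i - x' i)| ≤ ∑ i, |C j i * (xstar i - x' i)| :=
                Finset.abs_sum_le_sum_abs _ _
            _ ≤ ∑ _i : Fin k, CB * u := by
                apply Finset.sum_le_sum
                intro i _
                rw [abs_mul]
                apply mul_le_mul (hCb j i) ?_ (abs_nonneg _) hCB0
                rw [abs_sub_comm]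
                exact hue i
            _ = k * (CB * u) := by
                rw [Finset.sum_const, Finset.card_univ, Fintype.card_fin, nsmul_eq_mul]
        have hb2 : |∑ i, (C j i - C' j i) * x' i| ≤ k * (e * X) := by
          calc |∑ i, (C j i - C' j i) * x' i| ≤ ∑ i, |(C j i - C' j i) * x' i| :=
                Finset.abs_sum_le_sum_abs _ _
            _ ≤ ∑ _i : Fin k, e * X := by
                apply Finset.sum_le_sum
                intro i _
                rw [abs_mul]
                apply mul_le_mul ?_ (hx'b i) (abs_nonneg _) he0
                rw [abs_sub_comm]
                exact hCe' j i
            _ = k * (e * X) := by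
                rw [Finset.sum_const, Finset.card_univ, Fintype.card_fin, nsmul_eq_mul]
        have hident : d' j - ∑ i, C' j i * x' i
            = (d j - ∑ i, C j i * xstar i) + (d' j - d j)
              + (∑ i, C j i * (xstar i - x' i)) + (∑ i, (C j i - C' j i) * x' i) := by
          rw [e1, e2]
          ring
        have hslack := hδ₀le j hj
        have he2 : e * (2 * (1 + k * X)) ≤ δ₀ := (le_div_iff₀ (by linarith)).mp heB
        have hd'j := hde' j
        have hkCBu : k * (CB * u) ≤ k * CB * δ := by
          rw [mul_assoc ((k:ℝ)) CB δ]
          exact mul_le_mul_of_nonneg_left (mul_le_mul_of_nonneg_left hu hCB0)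
            (Nat.cast_nonneg k)
        have hδbound : (k:ℝ) * CB * δ < δ₀ / 2 := by
          rw [hδdef]
          exact arith2' ((k:ℝ) * CB) δ₀ hkCB hδ₀pos
        have hpos : 0 < d' j - ∑ i, C' j i * x' i := by
          rw [hident]
          have h1 := (abs_le.mp hb1).1
          have h2 := (abs_le.mp hb2).1
          have h3 := (abs_le.mp hd'j).1
          have he2' : e * (1 + (k:ℝ) * X) ≤ δ₀ / 2 := by
            have hr : e * (2 * (1 + (k:ℝ) * X)) = 2 * (e * (1 + (k:ℝ) * X)) := by ring
            linarith
          have hr2 : e + (k:ℝ) * (e * X) = e * (1 + (k:ℝ) * X) := by ring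
          linarith
        rcases mul_eq_zero.mp (hcompl' j) with h | h
        · exact hne h
        · linarith [sub_eq_zero.mp h]
      · rcases mul_eq_zero.mp (hcompl j) with h | h
        · exact h
        · exact absurd (by linarith [sub_eq_zero.mp h] : ∑ i, C j i * xstar i = d j) hj
    have hwb : ∀ i, |∑ j, (γ' j - γstar j) * C j i| ≤ L * (u + e) + B * e := by
      intro i
      have h1 : ∑ j, (γ' j - γstar j) * C j i
          = ∑ j, γ' j * C j i - ∑ j, γstar j * C j i := by
        rw [← Finset.sum_sub_distrib]
        exact Finset.sum_congr rfl fun j _ => by ring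
      have h2 : ∑ j, γ' j * C j i
          = ∑ j, γ' j * C' j i + ∑ j, γ' j * (C j i - C' j i) := by
        rw [← Finset.sum_add_distrib]
        exact Finset.sum_congr rfl fun j _ => by ring
      have hid : ∑ j, (γ' j - γstar j) * C j i
          = (gs i - g' i) + ∑ j, γ' j * (C j i - C' j i) := by
        rw [h1, h2]
        have ha := hstat'2 i
        have hb := hstat2 i
        linarith
      have h3 : |∑ j, γ' j * (C j i - C' j i)| ≤ s' * e := by
        calc |∑ j, γ' j * (C j i - C' j i)| ≤ ∑ j, |γ' j * (C j i - C' j i)| :=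
              Finset.abs_sum_le_sum_abs _ _
          _ ≤ ∑ j, γ' j * e := by
              apply Finset.sum_le_sum
              intro j _
              rw [abs_mul, abs_of_nonneg (hγ'0 j)]
              apply mul_le_mul_of_nonneg_left ?_ (hγ'0 j)
              rw [abs_sub_comm]
              exact hCe' j i
          _ = s' * e := by rw [← Finset.sum_mul]
      rw [hid]
      have h4 : |gs i - g' i| ≤ L * (u + e) := by
        rw [abs_sub_comm]
        exact hgdiff i
      have h5 : s' * e ≤ B * e := mul_le_mul_of_nonneg_right hs'B he0
      calc |(gs i - g' i) + ∑ j, γ' j * (C j i - C' j i)|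
          ≤ |gs i - g' i| + |∑ j, γ' j * (C j i - C' j i)| := abs_add_le _ _
        _ ≤ L * (u + e) + B * e := by linarith
    have hμsupp : ∀ j, ¬(∑ i, C j i * xstar i = d j) → (γ' - γstar) j = 0 := by
      intro j hj
      obtain ⟨ha, hb⟩ := hinact j hj
      rw [Pi.sub_apply, ha, hb, sub_zero]
    have hμnorm := hKanti (γ' - γstar) hμsupp
    have hwnorm : ‖fun i => ∑ j, (γ' - γstar) j * C j i‖ ≤ L * (u + e) + B * e := by
      rw [pi_norm_le_iff_of_nonneg (add_nonneg (mul_nonneg hL0 (by linarith))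
        (mul_nonneg (le_of_lt hBpos) he0))]
      intro i
      rw [Real.norm_eq_abs]
      simp only [Pi.sub_apply]
      exact hwb i
    have hfinal : ‖γ' - γstar‖ ≤ K * (L * (u + e) + B * e) := by
      calc ‖γ' - γstar‖ ≤ K * ‖fun i => ∑ j, (γ' - γstar) j * C j i‖ := hμnorm
        _ ≤ K * (L * (u + e) + B * e) :=
            mul_le_mul_of_nonneg_left hwnorm (le_of_lt hKpos)
    have hKM : K * (L * (u + e) + B * e) ≤ M₁ * (u + e) := by
      have h1 : K * (L * (u + e) + B * e) ≤ K * (L + B + 1) * (u + e) := by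
        have : L * (u + e) + B * e ≤ (L + B + 1) * (u + e) := by
          have hrr : (L + B + 1) * (u + e) = L * (u + e) + B * e + (B * u + (u + e)) := by
            ring
          have hBu : 0 ≤ B * u := mul_nonneg (le_of_lt hBpos) hu0
          linarith
        calc K * (L * (u + e) + B * e) ≤ K * ((L + B + 1) * (u + e)) :=
              mul_le_mul_of_nonneg_left this (le_of_lt hKpos)
          _ = K * (L + B + 1) * (u + e) := by ring
      have h2 : K * (L + B + 1) ≤ M₁ := by
        rw [hM₁def]
        have := div_nonneg (by linarith [norm_nonneg γstar] : (0:ℝ) ≤ B + ‖γstar‖ + 1)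
          (le_of_lt hδpos)
        linarith
      calc K * (L * (u + e) + B * e) ≤ K * (L + B + 1) * (u + e) := h1
        _ ≤ M₁ * (u + e) := mul_le_mul_of_nonneg_right h2 (by linarith)
    linarith
  · -- far case
    push_neg at hu
    have hγ'norm : ‖γ'‖ ≤ s' := by
      rw [pi_norm_le_iff_of_nonneg hs'0]
      intro j
      rw [Real.norm_eq_abs, abs_of_nonneg (hγ'0 j)]
      exact Finset.single_le_sum (fun j' _ => hγ'0 j') (Finset.mem_univ j)
    have h0 : ‖γ' - γstar‖ ≤ B + ‖γstar‖ := by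
      calc ‖γ' - γstar‖ ≤ ‖γ'‖ + ‖γstar‖ := norm_sub_le _ _
        _ ≤ B + ‖γstar‖ := by linarith
    have h2 : B + ‖γstar‖ + 1 ≤ (B + ‖γstar‖ + 1) / δ * u := by
      rw [div_mul_eq_mul_div, le_div_iff₀ hδpos]
      have := mul_le_mul_of_nonneg_left (le_of_lt hu)
        (by linarith [norm_nonneg γstar] : (0:ℝ) ≤ B + ‖γstar‖ + 1)
      linarith
    have h3 : (B + ‖γstar‖ + 1) / δ * u ≤ M₁ * (u + e) := by
      have hle : (B + ‖γstar‖ + 1) / δ ≤ M₁ := by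
        rw [hM₁def]
        have := mul_nonneg (le_of_lt hKpos) (by linarith : (0:ℝ) ≤ L + B + 1)
        linarith
      exact mul_le_mul hle (by linarith) hu0 (le_of_lt hM₁pos)
    calc ‖γ' - γstar‖ ≤ B + ‖γstar‖ := h0
      _ ≤ B + ‖γstar‖ + 1 := by linarith
      _ ≤ (B + ‖γstar‖ + 1) / δ * u := h2
      _ ≤ M₁ * (u + e) := h3



set_option maxHeartbeats 1000000 in
/-- rate of convergence of the KKT multipliers of the approximating
program towards the true multipliers. -/
theorem stmt17 {Ω : Type*} [MeasurableSpace Ω] (P : Measure Ω) [IsProbabilityMeasure P]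
    {k dT rC : ℕ}
    -- the true program (P_nl)
    (𝕏 : Set (Fin k → ℝ)) (h𝕏c : IsCompact 𝕏) (h𝕏ne : 𝕏.Nonempty)
    (𝕋 : Set (Fin dT → ℝ)) (T : Fin dT → ℝ) (hT : T ∈ 𝕋)
    (f : (Fin k → ℝ) → (Fin dT → ℝ) → ℝ)
    (hf : ContDiff ℝ 2 (fun p : (Fin k → ℝ) × (Fin dT → ℝ) => f p.1 p.2))
    (C : Fin rC → Fin k → ℝ) (hCrows : ∀ j, C j ≠ 0) (d : Fin rC → ℝ)
    (Slin : Set (Fin k → ℝ))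
    (hSlin : Slin = {x ∈ 𝕏 | ∀ j, ∑ i, C j i * x i ≤ d j})
    (hSne : Slin.Nonempty)
    (sol : Set (Fin k → ℝ))
    (hsol : sol = {x ∈ Slin | ∀ y ∈ Slin, f x T ≤ f y T})
    -- (A2)
    (hA2 : ∀ x ∈ sol, ∀ ς : Fin k → ℝ, ς ≠ 0 →
      (fderiv ℝ (fun x' => f x' T) x) ς ≤ 0 →
      (∀ j, (∑ i, C j i * x i = d j) → ∑ i, C j i * ς i ≤ 0) →
      0 < (fderiv ℝ (fun y => (fderiv ℝ (fun x' => f x' T) y) ς) x) ς)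
    -- (A3): unique optimal solution x*
    (xstar : Fin k → ℝ) (hA3 : sol = {xstar})
    -- (A4): LICQ and SC at x* with multipliers γ*
    (γstar : Fin rC → ℝ)
    (hLICQ : LinearIndependent ℝ
      (fun j : {j : Fin rC // ∑ i, C j i * xstar i = d j} => C j.1))
    (hγnonneg : ∀ j, 0 ≤ γstar j)
    (hstat : ∀ i, (fderiv ℝ (fun x' => f x' T) xstar) (Pi.single i 1)
        + ∑ j, γstar j * C j i = 0)
    (hcompl : ∀ j, γstar j * ((∑ i, C j i * xstar i) - d j) = 0)
    (hSC : ∀ j, (∑ i, C j i * xstar i = d j) → 0 < γstar j)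
    -- the approximating programs (P̂_nl)
    (That : ℕ → Ω → Fin dT → ℝ) (Chat : ℕ → Ω → Fin rC → Fin k → ℝ)
    (dhat : ℕ → Ω → Fin rC → ℝ) (xhat : ℕ → Ω → Fin k → ℝ)
    (hThatm : ∀ n, Measurable (That n)) (hChatm : ∀ n, Measurable (Chat n))
    (hdhatm : ∀ n, Measurable (dhat n)) (hxhatm : ∀ n, Measurable (xhat n))
    (hfeas : ∀ n ω, xhat n ω ∈ 𝕏 ∧ ∀ j, ∑ i, Chat n ω j i * xhat n ω i ≤ dhat n ω j)
    (hopt : ∀ n ω, ∀ y ∈ 𝕏, (∀ j, ∑ i, Chat n ω j i * y i ≤ dhat n ω j) →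
      f (xhat n ω) (That n ω) ≤ f y (That n ω))
    -- (A6): √n-consistency of the estimated program data
    (hA6 : IsBigOP P
      (fun n ω =>
        max (eucNorm (That n ω - T)) (max (frobNorm (Chat n ω - C)) (eucNorm (dhat n ω - d))))
      (fun n _ => (Real.sqrt n)⁻¹))
    -- KKT multipliers of the approximating program at x̂
    (γhat : ℕ → Ω → Fin rC → ℝ) (hγhatm : ∀ n, Measurable (γhat n))
    (hγhatnonneg : ∀ n ω j, 0 ≤ γhat n ω j)
    (hstathat : ∀ n ω i, (fderiv ℝ (fun x' => f x' (That n ω)) (xhat n ω)) (Pi.single i 1)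
        + ∑ j, γhat n ω j * Chat n ω j i = 0)
    (hcomplhat : ∀ n ω j,
      γhat n ω j * ((∑ i, Chat n ω j i * xhat n ω i) - dhat n ω j) = 0) :
    IsBigOP P (fun n ω => eucNorm (γhat n ω - γstar))
      (fun n ω => eucNorm (xhat n ω - xstar) + (Real.sqrt n)⁻¹) := by
  classical
  rcases Nat.eq_zero_or_pos rC with hrC0 | hrCpos
  · -- trivial case: no constraints at all
    subst hrC0
    intro ε hε
    refine ⟨1, one_pos, 0, fun n _ => ?_⟩
    have hempty : {ω | 1 * (eucNorm (xhat n ω - xstar) + (Real.sqrt n)⁻¹)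
        < eucNorm (γhat n ω - γstar)} = ∅ := by
      ext ω
      simp only [Set.mem_setOf_eq, Set.mem_empty_iff_false, iff_false, not_lt]
      have h0 : eucNorm (γhat n ω - γstar) = 0 := by
        simp [eucNorm]
      rw [h0, one_mul]
      have h1 := eucNorm_nonneg (xhat n ω - xstar)
      have h2 : (0:ℝ) ≤ (Real.sqrt n)⁻¹ := inv_nonneg.mpr (Real.sqrt_nonneg _)
      linarith
    rw [hempty]
    simp only [measure_empty]
    exact ENNReal.ofReal_pos.mpr hε
  · -- main case
    have hxsol : xstar ∈ sol := by rw [hA3]; exact rfl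
    have hxSlin : xstar ∈ Slin := by
      rw [hsol] at hxsol
      exact hxsol.1
    have hxX : xstar ∈ 𝕏 := by
      rw [hSlin] at hxSlin
      exact hxSlin.1
    have hxfeas : ∀ j, ∑ i, C j i * xstar i ≤ d j := by
      rw [hSlin] at hxSlin
      exact hxSlin.2
    obtain ⟨η₀, hη₀pos, M₁, hM₁pos, hdet⟩ :=
      det_key 𝕏 h𝕏c T f hf C d xstar hxX hxfeas γstar hLICQ hstat hcompl hrCpos
    intro ε hε
    obtain ⟨M₀, hM₀pos, N₀, hN₀⟩ := hA6 ε hε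
    set M : ℝ := Real.sqrt rC * M₁ * (1 + M₀) + 1 with hMdef
    have hMaux : 0 ≤ Real.sqrt rC * M₁ * (1 + M₀) :=
      mul_nonneg (mul_nonneg (Real.sqrt_nonneg _) (le_of_lt hM₁pos)) (by linarith)
    have hMpos : 0 < M := by rw [hMdef]; linarith
    set N₂ : ℕ := ⌈(M₀ / η₀)^2⌉₊ + 1 with hN₂def
    refine ⟨M, hMpos, max N₀ N₂, fun n hn => ?_⟩
    have hnN₀ : n ≥ N₀ := le_trans (le_max_left _ _) hn
    have hnN₂ : n ≥ N₂ := le_trans (le_max_right _ _) hn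
    have hn1 : 1 ≤ n := le_trans (by rw [hN₂def]; exact Nat.le_add_left 1 _) hnN₂
    have hsqrt_pos : 0 < Real.sqrt n := Real.sqrt_pos.mpr (by exact_mod_cast hn1)
    have hη : M₀ * (Real.sqrt n)⁻¹ ≤ η₀ := by
      have h1 : ((M₀ / η₀)^2 : ℝ) ≤ (n : ℝ) := by
        calc ((M₀ / η₀)^2 : ℝ) ≤ (⌈(M₀ / η₀)^2⌉₊ : ℝ) := Nat.le_ceil _
          _ ≤ (n : ℝ) := by
              have : (⌈(M₀ / η₀)^2⌉₊ : ℕ) ≤ n := le_trans (Nat.le_succ _) hnN₂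
              exact_mod_cast this
      have h2 : M₀ / η₀ ≤ Real.sqrt n := by
        have h3 := Real.sqrt_le_sqrt h1
        rwa [Real.sqrt_sq (div_nonneg (le_of_lt hM₀pos) (le_of_lt hη₀pos))] at h3
      have h4 : M₀ ≤ Real.sqrt n * η₀ := by
        have := (div_le_iff₀ hη₀pos).mp h2
        linarith
      calc M₀ * (Real.sqrt n)⁻¹ = M₀ / Real.sqrt n := (div_eq_mul_inv _ _).symm
        _ ≤ η₀ := by
            rw [div_le_iff₀ hsqrt_pos]
            linarith
    apply lt_of_le_of_lt (measure_mono ?_) (hN₀ n hnN₀)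
    intro ω hω
    simp only [Set.mem_setOf_eq] at hω ⊢
    by_contra hgood
    push_neg at hgood
    set e : ℝ := M₀ * (Real.sqrt n)⁻¹ with hedef
    have he0 : 0 ≤ e :=
      mul_nonneg (le_of_lt hM₀pos) (inv_nonneg.mpr (Real.sqrt_nonneg _))
    have hTmax : eucNorm (That n ω - T) ≤ e := le_trans (le_max_left _ _) hgood
    have hCmax : frobNorm (Chat n ω - C) ≤ e :=
      le_trans (le_trans (le_max_left _ _) (le_max_right _ _)) hgood
    have hdmax : eucNorm (dhat n ω - d) ≤ e :=
      le_trans (le_trans (le_max_right _ _) (le_max_right _ _)) hgood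
    have hbound := hdet (That n ω) (Chat n ω) (dhat n ω) (xhat n ω) (γhat n ω) e
      he0 hη
      (le_trans (norm_le_eucNorm _) hTmax)
      (le_trans (norm_le_frobNorm _) hCmax)
      (le_trans (norm_le_eucNorm _) hdmax)
      (hfeas n ω).1
      (hγhatnonneg n ω)
      (hstathat n ω)
      (hcomplhat n ω)
    -- convert back to euclidean norms
    set a : ℝ := eucNorm (xhat n ω - xstar) with hadef
    have ha0 : 0 ≤ a := eucNorm_nonneg _
    have hb0 : (0:ℝ) ≤ (Real.sqrt n)⁻¹ := inv_nonneg.mpr (Real.sqrt_nonneg _)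
    have h1 : eucNorm (γhat n ω - γstar) ≤ Real.sqrt rC * (M₁ * (‖xhat n ω - xstar‖ + e)) :=
      le_trans (eucNorm_le_sqrt_mul _)
        (mul_le_mul_of_nonneg_left hbound (Real.sqrt_nonneg _))
    have h2 : ‖xhat n ω - xstar‖ + e ≤ a + e :=
      add_le_add_left (norm_le_eucNorm _) e
    have h3 : a + e ≤ (1 + M₀) * (a + (Real.sqrt n)⁻¹) := by
      have hr : (1 + M₀) * (a + (Real.sqrt n)⁻¹)
          = a + M₀ * (Real.sqrt n)⁻¹ + (Real.sqrt n)⁻¹ + M₀ * a := by ring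
      have h5 : 0 ≤ M₀ * a := mul_nonneg (le_of_lt hM₀pos) ha0
      rw [hedef, hr]
      linarith
    have h4 : eucNorm (γhat n ω - γstar) ≤ M * (a + (Real.sqrt n)⁻¹) := by
      have hc1 : M₁ * (‖xhat n ω - xstar‖ + e) ≤ M₁ * ((1 + M₀) * (a + (Real.sqrt n)⁻¹)) :=
        mul_le_mul_of_nonneg_left (le_trans h2 h3) (le_of_lt hM₁pos)
      have hc2 : Real.sqrt rC * (M₁ * ((1 + M₀) * (a + (Real.sqrt n)⁻¹)))
          = (Real.sqrt rC * M₁ * (1 + M₀)) * (a + (Real.sqrt n)⁻¹) := by ring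
      have hc3 : (Real.sqrt rC * M₁ * (1 + M₀)) * (a + (Real.sqrt n)⁻¹)
          ≤ M * (a + (Real.sqrt n)⁻¹) := by
        apply mul_le_mul_of_nonneg_right ?_ (by linarith)
        rw [hMdef]
        linarith
      calc eucNorm (γhat n ω - γstar)
          ≤ Real.sqrt rC * (M₁ * (‖xhat n ω - xstar‖ + e)) := h1
        _ ≤ Real.sqrt rC * (M₁ * ((1 + M₀) * (a + (Real.sqrt n)⁻¹))) :=
            mul_le_mul_of_nonneg_left hc1 (Real.sqrt_nonneg _)
        _ = (Real.sqrt rC * M₁ * (1 + M₀)) * (a + (Real.sqrt n)⁻¹) := hc2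
        _ ≤ M * (a + (Real.sqrt n)⁻¹) := hc3
    exact absurd hω (not_lt.mpr h4)
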